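/- Any subset of ⌈k/r⌉ + k - 2 coded blocks of a code with locality r has joint entropy strictly less than M, when the blocks can be organized so that entropy is accumulated in repair groups of size r+1 contributing at most r·M/k each; consequently the distance bound d ≤ n - ⌈k/r⌉ - k + 2 is met with equality by the greedy construction. -/

import Mathlib

/-- For a code with locality `r` (each of the `n` blocks, of
entropy `M/k` each, lies in a repair group of size at most `r+1`), the greedy
procedure produces a subset `S` of at least `k + ⌈k/r⌉ - 2` coded blocks whose
joint entropy is strictly less than `M`; consequently the distance bound
`d ≤ n - ⌈k/r⌉ - k + 2` is met with equality.  (Here `(k+r-1)/r = ⌈k/r⌉`.) -/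
theorem stmt_19 (n k r : ℕ) (M : ℝ) (hM : 0 < M) (hk : 0 < k) (hr : 0 < r)
    (hn : k + (k + r - 1) / r - 2 ≤ n)
    (H : Finset (Fin n) → ℝ)
    (hH0 : H ∅ = 0)
    (hmono : ∀ S T : Finset (Fin n), S ⊆ T → H S ≤ H T)
    (hsub : ∀ S T : Finset (Fin n), H (S ∪ T) + H (S ∩ T) ≤ H S + H T)
    (hsingle : ∀ i : Fin n, H {i} = M / k)
    (hloc : ∀ i : Fin n, ∃ R : Finset (Fin n),
      i ∉ R ∧ R.card ≤ r ∧ H (insert i R) = H R) :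
    ∃ S : Finset (Fin n), k + (k + r - 1) / r - 2 ≤ S.card ∧ H S < M := by
  have hq : 0 < M / k := div_pos hM (by exact_mod_cast hk)
  have hpos : ∀ S : Finset (Fin n), 0 ≤ H S := by
    intro S; rw [← hH0]; exact hmono _ _ (Finset.empty_subset S)
  have hunion : ∀ S T : Finset (Fin n), H (S ∪ T) ≤ H S + H T := by
    intro S T; have h1 := hsub S T; have h2 := hpos (S ∩ T); linarith
  have hcard : ∀ T : Finset (Fin n), H T ≤ T.card * (M / k) := by
    intro T
    induction T using Finset.induction_on with
    | empty => simp [hH0]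
    | insert _ _ hx ih =>
      rename_i a s
      have h1 : H (insert a s) ≤ H {a} + H s := by
        rw [Finset.insert_eq]; exact hunion {a} s
      rw [hsingle a] at h1
      rw [Finset.card_insert_of_notMem hx]
      push_cast
      linarith
  obtain ⟨c, hc⟩ : ∃ c, (k + r - 1) / r = c := ⟨_, rfl⟩
  rw [hc] at hn ⊢
  -- main greedy induction
  have main : ∀ d, ∀ S : Finset (Fin n), S.card + d = k + c - 2 →
      ∃ S' : Finset (Fin n), S'.card = k + c - 2 ∧
        H S' ≤ H S + ((d - d / (r + 1) : ℕ) : ℝ) * (M / k) := by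
    intro d
    induction d using Nat.strong_induction_on with
    | _ d ih =>
      intro S hS
      rcases Nat.eq_zero_or_pos d with h0 | hd
      · subst h0
        exact ⟨S, by simpa using hS, by simp⟩
      by_cases hdr : d ≤ r
      · -- partial step: add any d fresh elements
        have hdn : d ≤ Sᶜ.card := by
          rw [Finset.card_compl, Fintype.card_fin]; omega
        obtain ⟨T, hTsub, hTcard⟩ := Finset.exists_subset_card_eq hdn
        have hdisj : Disjoint S T := by
          rw [Finset.disjoint_right]
          intro x hxT
          exact Finset.mem_compl.mp (hTsub hxT)
        refine ⟨S ∪ T, ?_, ?_⟩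
        · rw [Finset.card_union_of_disjoint hdisj, hTcard]; exact hS
        · have h1 := hunion S T
          have h2 := hcard T
          rw [hTcard] at h2
          have h3 : d / (r + 1) = 0 := Nat.div_eq_of_lt (by omega)
          rw [h3, Nat.sub_zero]
          linarith
      · -- full step: add a whole repair group
        have hSn : S.card < n := by omega
        have hne : Sᶜ.Nonempty := by
          rw [← Finset.card_pos, Finset.card_compl, Fintype.card_fin]; omega
        obtain ⟨j, hj⟩ := hne
        have hjS : j ∉ S := Finset.mem_compl.mp hj
        obtain ⟨R, hjR, hRcard, hHR⟩ := hloc j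
        have hbr : (R \ S).card ≤ r := le_trans (Finset.card_le_card (Finset.sdiff_subset)) hRcard
        -- cardinality of the new set
        have hsplit : S ∪ insert j R = S ∪ insert j (R \ S) := by
          ext x
          simp only [Finset.mem_union, Finset.mem_insert, Finset.mem_sdiff]
          tauto
        have hjRS : j ∉ insert j (R \ S) ∨ True := Or.inr trivial
        have hdisj : Disjoint S (insert j (R \ S)) := by
          rw [Finset.disjoint_right]
          intro x hx
          simp only [Finset.mem_insert, Finset.mem_sdiff] at hx
          rcases hx with rfl | ⟨_, hxS⟩
          · exact hjS
          · exact hxS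
        have hCard : (S ∪ insert j R).card = S.card + ((R \ S).card + 1) := by
          rw [hsplit, Finset.card_union_of_disjoint hdisj,
            Finset.card_insert_of_notMem (by simp [hjR])]
        -- entropy of the new set
        have hA : insert j R ∩ (S ∪ R) = R := by
          ext x
          simp only [Finset.mem_inter, Finset.mem_insert, Finset.mem_union]
          constructor
          · rintro ⟨rfl | hxR, hx2⟩
            · rcases hx2 with hx2 | hx2
              · exact absurd hx2 hjS
              · exact hx2
            · exact hxR
          · intro hx; exact ⟨Or.inr hx, Or.inr hx⟩
        have hU : insert j R ∪ (S ∪ R) = S ∪ insert j R := by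
          ext x
          simp only [Finset.mem_union, Finset.mem_insert]
          tauto
        have h1 : H (S ∪ insert j R) ≤ H (S ∪ R) := by
          have := hsub (insert j R) (S ∪ R)
          rw [hU, hA, hHR] at this
          linarith
        have h2 : H (S ∪ R) ≤ H S + H (R \ S) := by
          have := hunion S (R \ S)
          rwa [Finset.union_sdiff_self_eq_union] at this
        have h3 : H (R \ S) ≤ ((R \ S).card : ℝ) * (M / k) := hcard _
        have hstepH : H (S ∪ insert j R) ≤ H S + ((R \ S).card : ℝ) * (M / k) := by
          linarith
        -- apply IH with remaining budget d - a,  a = (R\S).card + 1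
        have had : (R \ S).card + 1 ≤ d := by omega
        obtain ⟨S', hS'card, hS'H⟩ := ih (d - ((R \ S).card + 1)) (by omega)
          (S ∪ insert j R) (by rw [hCard]; omega)
        refine ⟨S', hS'card, ?_⟩
        -- arithmetic over ℕ divisions
        have hnat : ((d - ((R \ S).card + 1)) - (d - ((R \ S).card + 1)) / (r + 1))
            + (R \ S).card ≤ d - d / (r + 1) := by
          have h5 : d / (r + 1) ≤ (d - ((R \ S).card + 1)) / (r + 1) + 1 := by
            calc d / (r + 1) ≤ ((d - ((R \ S).card + 1)) + (r + 1)) / (r + 1) :=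
                  Nat.div_le_div_right (by omega)
              _ = (d - ((R \ S).card + 1)) / (r + 1) + 1 := Nat.add_div_right _ (Nat.succ_pos r)
          have h6 : (d - ((R \ S).card + 1)) / (r + 1) ≤ d - ((R \ S).card + 1) :=
            Nat.div_le_self _ _
          have h7 : d / (r + 1) ≤ d := Nat.div_le_self _ _
          obtain ⟨e1, he1⟩ : ∃ e, d / (r + 1) = e := ⟨_, rfl⟩
          obtain ⟨e2, he2⟩ : ∃ e, (d - ((R \ S).card + 1)) / (r + 1) = e := ⟨_, rfl⟩
          rw [he1] at h5 h7 ⊢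
          rw [he2] at h5 h6 ⊢
          omega
        have hmul : (((d - ((R \ S).card + 1)) - (d - ((R \ S).card + 1)) / (r + 1) : ℕ) : ℝ)
              * (M / k) + ((R \ S).card : ℝ) * (M / k)
            ≤ ((d - d / (r + 1) : ℕ) : ℝ) * (M / k) := by
          rw [← add_mul]
          refine mul_le_mul_of_nonneg_right ?_ hq.le
          exact_mod_cast hnat
        linarith
  obtain ⟨S', hcard', hH'⟩ := main (k + c - 2) ∅ (by simp)
  refine ⟨S', by omega, ?_⟩
  have hcr : c * r ≤ k + r - 1 := by rw [← hc]; exact Nat.div_mul_le_self _ _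
  have hc1 : 1 ≤ c := by
    rw [← hc]; exact (Nat.one_le_div_iff hr).mpr (by omega)
  have hkey : (c - 1) * (r + 1) ≤ k + c - 2 := by
    obtain ⟨c', rfl⟩ := Nat.exists_eq_add_of_le hc1
    have hre : (1 + c') * r = r + c' * r := by ring
    rw [hre] at hcr
    obtain ⟨p, hp⟩ : ∃ p, c' * r = p := ⟨_, rfl⟩
    rw [hp] at hcr
    have h1 : 1 + c' - 1 = c' := by omega
    have h2 : c' * (r + 1) = p + c' := by rw [← hp]; ring
    rw [h1, h2]
    omega
  have hdiv : c - 1 ≤ (k + c - 2) / (r + 1) :=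
    (Nat.le_div_iff_mul_le (Nat.succ_pos r)).mpr hkey
  obtain ⟨e, he⟩ : ∃ e, (k + c - 2) / (r + 1) = e := ⟨_, rfl⟩
  rw [he] at hdiv hH'
  have hfin : (k + c - 2) - e ≤ k - 1 := by omega
  rw [hH0] at hH'
  have h9 : (((k + c - 2) - e : ℕ) : ℝ) * (M / k) ≤ ((k - 1 : ℕ) : ℝ) * (M / k) :=
    mul_le_mul_of_nonneg_right (by exact_mod_cast hfin) hq.le
  have hlt : ((k - 1 : ℕ) : ℝ) * (M / k) < M := by
    have h1 : ((k - 1 : ℕ) : ℝ) < (k : ℝ) := by exact_mod_cast Nat.sub_lt hk Nat.one_pos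
    have h2 : (k : ℝ) * (M / k) = M := by
      field_simp
    nlinarith
  linarith
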